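/- Let p, q be integers with 2 ≤ p < q, let γ ∈ (0, γ_{p,q}), and let a < A be the two positive roots of g(u) = 1 − u^{p−1} + γ u^{q−1}. Let N ≥ 1 and let ũ ∈ ℝ^N satisfy |ũ_n| = A for all n. Then all roots of the characteristic polynomial of the matrix product L̃⁺L̃⁻ are real; 0 is a simple root; exactly N₀(ũ) roots counted with multiplicity are negative; and exactly N − N₀(ũ) − 1 roots counted with multiplicity are positive. -/

import Mathlib

/-- The critical parameter `γ_{p,q} = ((p−1)/(q−1))·((q−p)/(q−1))^{(q−p)/(p−1)}`. -/
noncomputable def gammaCrit (p q : ℕ) : ℝ :=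
  (((p : ℝ) - 1) / ((q : ℝ) - 1)) *
    (((q : ℝ) - (p : ℝ)) / ((q : ℝ) - 1)) ^ (((q : ℝ) - (p : ℝ)) / ((p : ℝ) - 1))

/-- Extension of a vector `Fin N → ℝ` to `ℤ` by zero (0-indexed). -/
def extZ (N : ℕ) (ut : Fin N → ℝ) : ℤ → ℝ :=
  fun k => if h : 0 ≤ k ∧ k < (N : ℤ) then ut ⟨k.toNat, by omega⟩ else 0

/-- The `N×N` symmetric tridiagonal matrix `L̃⁻` with diagonal entries
`(ũ_{n−1} + ũ_{n+1})/ũ_n` (with the convention `ũ₀ = ũ_{N+1} = 0`) and `−1` on the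
sub- and super-diagonal. -/
noncomputable def Lminus (N : ℕ) (ut : Fin N → ℝ) : Matrix (Fin N) (Fin N) ℝ :=
  fun i j =>
    if i = j then (extZ N ut (((i : ℕ) : ℤ) - 1) + extZ N ut (((i : ℕ) : ℤ) + 1)) / ut i
    else if (((i : ℕ) : ℤ) - ((j : ℕ) : ℤ)).natAbs = 1 then -1 else 0

/-- The `N×N` diagonal matrix `L̃⁺` with entries `1 − p|ũ_n|^{p−1} + γ q |ũ_n|^{q−1}`. -/
noncomputable def Lplus (N : ℕ) (p q : ℕ) (γ : ℝ) (ut : Fin N → ℝ) :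
    Matrix (Fin N) (Fin N) ℝ :=
  Matrix.diagonal (fun n => 1 - (p : ℝ) * |ut n| ^ (p - 1) + γ * (q : ℝ) * |ut n| ^ (q - 1))

/-- The number `N₀(ũ)` of sign alternations of `ũ`. -/
noncomputable def nFlips (N : ℕ) (ut : Fin N → ℝ) : ℕ :=
  ((Finset.range (N - 1)).filter
    (fun i => (if h : i < N then ut ⟨i, h⟩ else 0) *
              (if h : i + 1 < N then ut ⟨i + 1, h⟩ else 0) < 0)).card

open Finset Matrix Polynomial

section Aux

lemma cpos (p q : ℕ) (hp : 2 ≤ p) (hpq : p < q) (γ : ℝ) (hγ0 : 0 < γ)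
    (a A : ℝ) (ha : 0 < a) (haA : a < A)
    (hra : 1 - a ^ (p - 1) + γ * a ^ (q - 1) = 0)
    (hrA : 1 - A ^ (p - 1) + γ * A ^ (q - 1) = 0) :
    0 < 1 - (p : ℝ) * A ^ (p - 1) + γ * (q : ℝ) * A ^ (q - 1) := by
  have hA0 : 0 < A := ha.trans haA
  by_contra hcon
  push_neg at hcon
  have key : γ * ((q : ℝ) - 1) * A ^ (q - 1) ≤ ((p : ℝ) - 1) * A ^ (p - 1) := by nlinarith
  have hApq : A ^ (q - 1) = A ^ (q - p) * A ^ (p - 1) := by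
    rw [← pow_add]; congr 1; omega
  have key' : γ * ((q : ℝ) - 1) * A ^ (q - p) ≤ (p : ℝ) - 1 := by
    have hpow : (0:ℝ) < A ^ (p - 1) := pow_pos hA0 _
    rw [hApq] at key
    exact (mul_le_mul_iff_left₀ hpow).mp
      (by linarith [key] : (γ * ((q : ℝ) - 1) * A ^ (q - p)) * A ^ (p-1) ≤ ((p : ℝ) - 1) * A ^ (p-1))
  set g : ℝ → ℝ := fun u => 1 - u ^ (p - 1) + γ * u ^ (q - 1) with hg
  have hderiv : ∀ u : ℝ, HasDerivAt g
      (-(((p:ℝ) - 1) * u ^ (p - 2)) + γ * (((q:ℝ) - 1) * u ^ (q - 2))) u := by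
    intro u
    have h1 : HasDerivAt (fun u : ℝ => u ^ (p - 1)) (((p - 1 : ℕ) : ℝ) * u ^ (p - 1 - 1)) u :=
      hasDerivAt_pow (p - 1) u
    have h2 : HasDerivAt (fun u : ℝ => u ^ (q - 1)) (((q - 1 : ℕ) : ℝ) * u ^ (q - 1 - 1)) u :=
      hasDerivAt_pow (q - 1) u
    have e1 : p - 1 - 1 = p - 2 := by omega
    have e2 : q - 1 - 1 = q - 2 := by omega
    have c1 : ((p - 1 : ℕ) : ℝ) = (p : ℝ) - 1 := by push_cast [Nat.cast_sub (by omega : 1 ≤ p)]; ring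
    have c2 : ((q - 1 : ℕ) : ℝ) = (q : ℝ) - 1 := by push_cast [Nat.cast_sub (by omega : 1 ≤ q)]; ring
    rw [e1, c1] at h1; rw [e2, c2] at h2
    exact HasDerivAt.congr_deriv (((hasDerivAt_const u (1:ℝ)).sub h1).add (h2.const_mul γ)) (by ring)
  have hanti : StrictAntiOn g (Set.Icc a A) := by
    apply strictAntiOn_of_deriv_neg (convex_Icc a A)
    · exact Continuous.continuousOn (by fun_prop)
    · intro u hu
      rw [interior_Icc] at hu
      rw [(hderiv u).deriv]
      have hu0 : 0 < u := ha.trans hu.1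
      have h2 : u ^ (q - p) < A ^ (q - p) := pow_lt_pow_left₀ hu.2 hu0.le (by omega)
      have e3 : u ^ (q - 2) = u ^ (q - p) * u ^ (p - 2) := by rw [← pow_add]; congr 1; omega
      have hq1 : (0:ℝ) < (q : ℝ) - 1 := by
        have : (2:ℝ) ≤ (q:ℝ) := by exact_mod_cast (by omega : 2 ≤ q)
        linarith
      have hup : (0:ℝ) < u ^ (p - 2) := pow_pos hu0 _
      have : γ * ((q:ℝ) - 1) * u ^ (q - 2) < ((p:ℝ) - 1) * u ^ (p - 2) := by
        rw [e3]
        calc γ * ((q:ℝ) - 1) * (u ^ (q - p) * u ^ (p - 2))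
            < γ * ((q:ℝ) - 1) * (A ^ (q - p) * u ^ (p - 2)) := by
              apply mul_lt_mul_of_pos_left _ (by positivity)
              exact mul_lt_mul_of_pos_right h2 hup
          _ = (γ * ((q:ℝ) - 1) * A ^ (q - p)) * u ^ (p - 2) := by ring
          _ ≤ ((p:ℝ) - 1) * u ^ (p - 2) := mul_le_mul_of_nonneg_right key' hup.le
      linarith
  have : (0:ℝ) < 0 := by
    have h := hanti (Set.left_mem_Icc.mpr haA.le) (Set.right_mem_Icc.mpr haA.le) haA
    simp only [hg] at h
    rw [hra, hrA] at h
    exact h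
  exact lt_irrefl _ this

lemma quad_eq {N : ℕ} (d₁ d₂ : Fin N → ℝ) (C : Matrix (Fin N) (Fin N) ℝ)
    (h : Matrix.diagonal d₁ = Cᵀ * Matrix.diagonal d₂ * C) (x : Fin N → ℝ) :
    x ⬝ᵥ (Matrix.diagonal d₁ *ᵥ x) = (C *ᵥ x) ⬝ᵥ (Matrix.diagonal d₂ *ᵥ (C *ᵥ x)) := by
  rw [h]
  rw [← Matrix.mulVec_mulVec, ← Matrix.mulVec_mulVec, Matrix.dotProduct_mulVec,
    Matrix.vecMul_transpose]

lemma inertia_le {N : ℕ} (d₁ d₂ : Fin N → ℝ) (C : Matrix (Fin N) (Fin N) ℝ)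
    (hC : IsUnit C.det) (h : Matrix.diagonal d₁ = Cᵀ * Matrix.diagonal d₂ * C) :
    (univ.filter fun n => d₁ n < 0).card ≤ (univ.filter fun n => d₂ n < 0).card := by
  classical
  have hQ := quad_eq d₁ d₂ C h
  set s₁ : Finset (Fin N) := univ.filter fun n => d₁ n < 0 with hs₁
  set s₂ : Finset (Fin N) := univ.filter fun n => d₂ n < 0 with hs₂
  set P₁ : Submodule ℝ (Fin N → ℝ) :=
    Submodule.span ℝ ((fun n => Pi.single n (1:ℝ)) '' ↑s₁) with hP₁
  set P₂ : Submodule ℝ (Fin N → ℝ) :=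
    Submodule.span ℝ ((fun n => Pi.single n (1:ℝ)) '' ↑(s₂ᶜ)) with hP₂
  have hsupp : ∀ (t : Finset (Fin N)) (x : Fin N → ℝ),
      x ∈ Submodule.span ℝ ((fun n => Pi.single n (1:ℝ)) '' (t : Set (Fin N))) → ∀ m ∉ t, x m = 0 := by
    intro t x hx m hm
    induction hx using Submodule.span_induction with
    | mem y hy =>
      obtain ⟨n, hn, rfl⟩ := hy
      apply Pi.single_eq_of_ne
      intro hcon; subst hcon; exact hm hn
    | zero => rfl
    | add y z _ _ hy hz => simp [hy, hz]
    | smul c y _ hy => simp [hy]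
  have hdim : ∀ (t : Finset (Fin N)),
      Module.finrank ℝ (Submodule.span ℝ ((fun n => Pi.single n (1:ℝ)) '' (t : Set (Fin N)))) = t.card := by
    intro t
    have hli : LinearIndependent ℝ (fun n : ↥(t : Set (Fin N)) => (Pi.single (n : Fin N) (1:ℝ) : Fin N → ℝ)) := by
      have := (Pi.basisFun ℝ (Fin N)).linearIndependent
      have h2 := this.comp (fun n : ↥(t : Set (Fin N)) => (n : Fin N)) Subtype.coe_injective
      simpa [Function.comp_def, Pi.basisFun_apply] using h2
    have := finrank_span_eq_card hli
    have hrange : Set.range (fun n : ↥(t : Set (Fin N)) => (Pi.single (n : Fin N) (1:ℝ) : Fin N → ℝ))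
        = (fun n => Pi.single n (1:ℝ)) '' (t : Set (Fin N)) := by
      ext y; simp [Set.range]
    rw [hrange] at this
    rw [this]
    simp [Fintype.card_coe]
  have hQ1 : ∀ x ∈ P₁, x ≠ 0 → x ⬝ᵥ (Matrix.diagonal d₁ *ᵥ x) < 0 := by
    intro x hx hx0
    have hz : ∀ m ∉ s₁, x m = 0 := hsupp s₁ x hx
    obtain ⟨n₀, hn₀⟩ := Function.ne_iff.mp hx0
    have hn₀s : n₀ ∈ s₁ := by
      by_contra hc; exact hn₀ (hz n₀ hc)
    have hterm : ∀ n : Fin N, x n * (Matrix.diagonal d₁ *ᵥ x) n ≤ 0 := by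
      intro n
      rw [Matrix.mulVec_diagonal]
      by_cases hn : n ∈ s₁
      · have : d₁ n < 0 := by simpa [hs₁] using hn
        nlinarith [sq_nonneg (x n)]
      · simp [hz n hn]
    have hterm0 : x n₀ * (Matrix.diagonal d₁ *ᵥ x) n₀ < 0 := by
      rw [Matrix.mulVec_diagonal]
      have : d₁ n₀ < 0 := by simpa [hs₁] using hn₀s
      have hn₀' : x n₀ ≠ 0 := by simpa using hn₀
      have hx2 : 0 < x n₀ * x n₀ := mul_self_pos.mpr hn₀'
      nlinarith
    calc x ⬝ᵥ (Matrix.diagonal d₁ *ᵥ x) = ∑ n, x n * (Matrix.diagonal d₁ *ᵥ x) n := rfl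
      _ < 0 := Finset.sum_neg' (fun i _ => hterm i) ⟨n₀, Finset.mem_univ _, hterm0⟩
  have hQ2 : ∀ y ∈ P₂, 0 ≤ y ⬝ᵥ (Matrix.diagonal d₂ *ᵥ y) := by
    intro y hy
    have hz : ∀ m ∉ s₂ᶜ, y m = 0 := hsupp (s₂ᶜ) y hy
    apply Finset.sum_nonneg
    intro n _
    rw [Matrix.mulVec_diagonal]
    by_cases hn : n ∈ s₂ᶜ
    · have : ¬ d₂ n < 0 := by simpa [hs₂] using hn
      nlinarith [sq_nonneg (y n), not_lt.mp this]
    · simp [hz n hn]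
  have hinj : Function.Injective C.mulVecLin := by
    have hinv : Invertible C := C.invertibleOfIsUnitDet hC
    intro x y hxy
    have : C⁻¹ *ᵥ (C *ᵥ x) = C⁻¹ *ᵥ (C *ᵥ y) := by
      simp only [Matrix.mulVecLin_apply] at hxy; rw [hxy]
    rwa [Matrix.mulVec_mulVec, Matrix.mulVec_mulVec, Matrix.nonsing_inv_mul _ hC,
      Matrix.one_mulVec, Matrix.one_mulVec] at this
  have hmapdim : Module.finrank ℝ (P₁.map C.mulVecLin) = s₁.card := by
    rw [← hdim s₁, ← hP₁]
    exact (Submodule.equivMapOfInjective _ hinj P₁).symm.finrank_eq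
  have hinf : P₁.map C.mulVecLin ⊓ P₂ = ⊥ := by
    rw [Submodule.eq_bot_iff]
    rintro y ⟨⟨x, hxP, rfl⟩, hyP₂⟩
    by_cases hx0 : x = 0
    · simp [hx0]
    · exfalso
      have h1 := hQ1 x hxP hx0
      have h2 := hQ2 (C.mulVecLin x) (by simpa using hyP₂)
      rw [hQ x] at h1
      simp only [Matrix.mulVecLin_apply] at h2
      linarith
  have hsum := Submodule.finrank_sup_add_finrank_inf_eq (P₁.map C.mulVecLin) P₂
  rw [hinf] at hsum
  have hle : Module.finrank ℝ ((P₁.map C.mulVecLin) ⊔ P₂ : Submodule ℝ (Fin N → ℝ)) ≤ N := by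
    have := Submodule.finrank_le ((P₁.map C.mulVecLin) ⊔ P₂ : Submodule ℝ (Fin N → ℝ))
    simpa using this
  have hdim2 : Module.finrank ℝ P₂ = N - s₂.card := by
    rw [hP₂, hdim (s₂ᶜ), Finset.card_compl]
    simp
  have hcard2 : s₂.card ≤ N := by
    have := Finset.card_le_card (Finset.subset_univ s₂); simpa using this
  rw [hmapdim, hdim2] at hsum
  rw [finrank_bot ℝ (Fin N → ℝ), add_zero] at hsum
  omega

lemma charpoly_conj' {N : ℕ} (U D V : Matrix (Fin N) (Fin N) ℝ)
    (hUV : U * V = 1) (hVU : V * U = 1) : (U * D * V).charpoly = D.charpoly := by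
  classical
  unfold Matrix.charpoly
  have hmap : ∀ M : Matrix (Fin N) (Fin N) ℝ, Matrix.charmatrix M
      = Matrix.scalar (Fin N) (X : ℝ[X]) - (Polynomial.C : ℝ →+* ℝ[X]).mapMatrix M := fun M => rfl
  have hC : (Polynomial.C : ℝ →+* ℝ[X]).mapMatrix U * (Polynomial.C : ℝ →+* ℝ[X]).mapMatrix V = 1 := by
    rw [← RingHom.map_mul, hUV, RingHom.map_one]
  have hC' : (Polynomial.C : ℝ →+* ℝ[X]).mapMatrix V * (Polynomial.C : ℝ →+* ℝ[X]).mapMatrix U = 1 := by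
    rw [← RingHom.map_mul, hVU, RingHom.map_one]
  have hfac : Matrix.charmatrix (U * D * V)
      = (Polynomial.C : ℝ →+* ℝ[X]).mapMatrix U * Matrix.charmatrix D
        * (Polynomial.C : ℝ →+* ℝ[X]).mapMatrix V := by
    have hcomm : ∀ M : Matrix (Fin N) (Fin N) ℝ[X],
        (Matrix.scalar (Fin N)) (X : ℝ[X]) * M = M * (Matrix.scalar (Fin N)) (X : ℝ[X]) := by
      intro M
      apply Matrix.ext; intro i j
      rw [Matrix.scalar_apply, Matrix.diagonal_mul, Matrix.mul_diagonal, mul_comm]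
    have hmid : (Polynomial.C : ℝ →+* ℝ[X]).mapMatrix U * (Matrix.scalar (Fin N)) (X : ℝ[X])
        * (Polynomial.C : ℝ →+* ℝ[X]).mapMatrix V = (Matrix.scalar (Fin N)) (X : ℝ[X]) := by
      rw [mul_assoc, hcomm, ← mul_assoc, hC, one_mul]
    rw [hmap, hmap, mul_sub, sub_mul, hmid]
    rw [RingHom.map_mul, RingHom.map_mul]
  rw [hfac, Matrix.det_mul, Matrix.det_mul, mul_comm, ← mul_assoc, ← Matrix.det_mul, hC',
    Matrix.det_one, one_mul]

lemma charpoly_diag {N : ℕ} (d : Fin N → ℝ) :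
    (Matrix.diagonal d).charpoly = ∏ i, (X - C (d i)) := by
  classical
  unfold Matrix.charpoly
  have : Matrix.charmatrix (Matrix.diagonal d) = Matrix.diagonal (fun i => (X : ℝ[X]) - C (d i)) := by
    apply Matrix.ext; intro i j
    by_cases h : i = j
    · subst h; simp [Matrix.charmatrix_apply_eq, Matrix.diagonal_apply_eq]
    · rw [Matrix.charmatrix_apply_ne _ _ _ h, Matrix.diagonal_apply_ne _ h,
        Matrix.diagonal_apply_ne _ h, map_zero, neg_zero]
  rw [this, Matrix.det_diagonal]

variable {N : ℕ} (S : Matrix (Fin N) (Fin N) ℝ) (hS : S.IsHermitian)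

lemma ofReal_comp (μ : Fin N → ℝ) : (RCLike.ofReal (K := ℝ)) ∘ μ = μ := by
  ext i; simp

lemma unitary_facts :
    (hS.eigenvectorUnitary : Matrix (Fin N) (Fin N) ℝ) * star (hS.eigenvectorUnitary : Matrix (Fin N) (Fin N) ℝ) = 1 ∧
    star (hS.eigenvectorUnitary : Matrix (Fin N) (Fin N) ℝ) * (hS.eigenvectorUnitary : Matrix (Fin N) (Fin N) ℝ) = 1 :=
  ⟨(Unitary.mem_iff.mp hS.eigenvectorUnitary.2).2, (Unitary.mem_iff.mp hS.eigenvectorUnitary.2).1⟩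

lemma herm_charpoly : S.charpoly = ∏ i, (X - C (hS.eigenvalues i)) := by
  classical
  obtain ⟨h1, h2⟩ := unitary_facts S hS
  have hspec := hS.spectral_theorem
  rw [ofReal_comp] at hspec
  conv_lhs => rw [hspec, Unitary.conjStarAlgAut_apply]
  rw [charpoly_conj' _ _ _ h1 h2, charpoly_diag]

lemma herm_diag : Matrix.diagonal hS.eigenvalues =
    star (hS.eigenvectorUnitary : Matrix (Fin N) (Fin N) ℝ) * S *
      (hS.eigenvectorUnitary : Matrix (Fin N) (Fin N) ℝ) := by
  have := hS.conjStarAlgAut_star_eigenvectorUnitary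
  rw [ofReal_comp] at this
  simp only [Unitary.conjStarAlgAut_apply, Unitary.coe_star, star_star] at this
  exact this.symm

lemma inertia_eq (d : Fin N → ℝ) (B : Matrix (Fin N) (Fin N) ℝ) (hB : IsUnit B.det)
    (hfac : S = Bᵀ * Matrix.diagonal d * B) :
    ((univ.filter fun i => hS.eigenvalues i < 0).card = (univ.filter fun n => d n < 0).card) ∧
    ((univ.filter fun i => 0 < hS.eigenvalues i).card = (univ.filter fun n => 0 < d n).card) := by
  classical
  set U := (hS.eigenvectorUnitary : Matrix (Fin N) (Fin N) ℝ) with hUdef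
  obtain ⟨h1, h2⟩ := unitary_facts S hS
  have hUdet : IsUnit U.det := by
    apply IsUnit.of_mul_eq_one (star U).det
    rw [← Matrix.det_mul, h1, Matrix.det_one]
  set C : Matrix (Fin N) (Fin N) ℝ := B * U with hCdef
  have hCdet : IsUnit C.det := by rw [hCdef, Matrix.det_mul]; exact hB.mul hUdet
  have hstarT : star U = Uᵀ := by
    rw [Matrix.star_eq_conjTranspose, Matrix.conjTranspose_eq_transpose_of_trivial]
  have h : Matrix.diagonal hS.eigenvalues = Cᵀ * Matrix.diagonal d * C := by
    rw [herm_diag S hS]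
    have e : Cᵀ * Matrix.diagonal d * C = star U * S * U := by
      rw [hstarT, hCdef, Matrix.transpose_mul]
      calc Uᵀ * Bᵀ * Matrix.diagonal d * (B * U)
          = Uᵀ * (Bᵀ * Matrix.diagonal d * B) * U := by simp only [Matrix.mul_assoc]
        _ = Uᵀ * S * U := by rw [← hfac]
    rw [e]
  have hinv : C * C⁻¹ = 1 := Matrix.mul_nonsing_inv _ hCdet
  have hinvT : Cᵀ⁻¹ * Cᵀ = 1 := by
    rw [← Matrix.transpose_nonsing_inv, ← Matrix.transpose_mul, hinv, Matrix.transpose_one]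
  have hrev : Matrix.diagonal d = (C⁻¹)ᵀ * Matrix.diagonal hS.eigenvalues * C⁻¹ := by
    rw [h]
    calc Matrix.diagonal d
        = (Cᵀ⁻¹ * Cᵀ) * Matrix.diagonal d * (C * C⁻¹) := by
          rw [hinvT, hinv, one_mul, mul_one]
      _ = (C⁻¹ᵀ * Cᵀ) * Matrix.diagonal d * (C * C⁻¹) := by rw [Matrix.transpose_nonsing_inv]
      _ = C⁻¹ᵀ * (Cᵀ * Matrix.diagonal d * C) * C⁻¹ := by simp only [Matrix.mul_assoc]
  have hCinvdet : IsUnit (C⁻¹).det := by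
    apply IsUnit.of_mul_eq_one C.det
    rw [← Matrix.det_mul, Matrix.nonsing_inv_mul _ hCdet, Matrix.det_one]
  have hneg : Matrix.diagonal (fun i => -hS.eigenvalues i) = Cᵀ * Matrix.diagonal (fun n => -d n) * C := by
    have e1 : Matrix.diagonal (fun i => -hS.eigenvalues i) = -Matrix.diagonal hS.eigenvalues := by
      rw [← Matrix.diagonal_neg]
    rw [e1, h]
    have e2 : Matrix.diagonal (fun n => -d n) = -Matrix.diagonal d := by
      rw [← Matrix.diagonal_neg]
    rw [e2, Matrix.mul_neg, Matrix.neg_mul]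
  have hnegrev : Matrix.diagonal (fun n => -d n) = (C⁻¹)ᵀ * Matrix.diagonal (fun i => -hS.eigenvalues i) * C⁻¹ := by
    have e1 : Matrix.diagonal (fun i => -hS.eigenvalues i) = -Matrix.diagonal hS.eigenvalues := by
      rw [← Matrix.diagonal_neg]
    have e2 : Matrix.diagonal (fun n => -d n) = -Matrix.diagonal d := by
      rw [← Matrix.diagonal_neg]
    rw [e1, e2, hrev, Matrix.mul_neg, Matrix.neg_mul]
  constructor
  · exact le_antisymm (inertia_le _ _ C hCdet h) (inertia_le _ _ C⁻¹ hCinvdet hrev)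
  · have hposneg : ∀ f : Fin N → ℝ, (univ.filter fun n => 0 < f n) = (univ.filter fun n => (fun m => -f m) n < 0) := by
      intro f
      apply Finset.filter_congr
      intro n _
      simp
    rw [hposneg hS.eigenvalues, hposneg d]
    exact le_antisymm (inertia_le _ _ C hCdet hneg) (inertia_le _ _ C⁻¹ hCinvdet hnegrev)

end Aux

section Fac

noncomputable def Bmat (N : ℕ) (ut : Fin N → ℝ) : Matrix (Fin N) (Fin N) ℝ :=
  fun k m => if (k : ℕ) = (m : ℕ) then 1 / ut m
    else if (m : ℕ) = (k : ℕ) + 1 then -(1 / ut m) else 0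

noncomputable def dvec (N : ℕ) (ut : Fin N → ℝ) : Fin N → ℝ :=
  fun n => extZ N ut ((n : ℕ) : ℤ) * extZ N ut (((n : ℕ) : ℤ) + 1)

lemma extZ_coe {N : ℕ} (ut : Fin N → ℝ) {m : ℕ} (h : m < N) :
    extZ N ut (m : ℤ) = ut ⟨m, h⟩ := by
  rw [extZ, dif_pos ⟨by positivity, by exact_mod_cast h⟩]
  congr 1

lemma extZ_fin {N : ℕ} (ut : Fin N → ℝ) (n : Fin N) :
    extZ N ut ((n : ℕ) : ℤ) = ut n := by
  rw [extZ_coe ut n.isLt]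

lemma extZ_out {N : ℕ} (ut : Fin N → ℝ) {k : ℤ} (h : ¬(0 ≤ k ∧ k < (N : ℤ))) :
    extZ N ut k = 0 := by
  rw [extZ, dif_neg h]

lemma Bmat_zero {N : ℕ} (ut : Fin N → ℝ) (k m : Fin N)
    (h : ¬((k : ℕ) = (m : ℕ) ∨ (m : ℕ) = (k : ℕ) + 1)) : Bmat N ut k m = 0 := by
  push_neg at h
  rw [Bmat]; rw [if_neg h.1, if_neg h.2]

lemma Bmat_triangular {N : ℕ} (ut : Fin N → ℝ) : (Bmat N ut).BlockTriangular id := by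
  intro i j hij
  simp only [id] at hij
  apply Bmat_zero
  have := Fin.lt_iff_val_lt_val.mp hij
  omega

lemma Bmat_det {N : ℕ} (ut : Fin N → ℝ) (hut : ∀ n, ut n ≠ 0) :
    IsUnit (Bmat N ut).det := by
  rw [Matrix.det_of_upperTriangular (Bmat_triangular ut)]
  rw [isUnit_iff_ne_zero]
  apply Finset.prod_ne_zero_iff.mpr
  intro n _
  rw [Bmat, if_pos rfl]
  exact one_div_ne_zero (hut n)

lemma Lminus_fac {N : ℕ} (ut : Fin N → ℝ) (hut : ∀ n, ut n ≠ 0) :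
    Lminus N ut = (Bmat N ut)ᵀ * Matrix.diagonal (dvec N ut) * Bmat N ut := by
  apply Matrix.ext; intro i j
  have hrhs : ((Bmat N ut)ᵀ * Matrix.diagonal (dvec N ut) * Bmat N ut) i j
      = ∑ k, Bmat N ut k i * dvec N ut k * Bmat N ut k j := by
    rw [Matrix.mul_apply]
    congr 1; ext k
    rw [Matrix.mul_diagonal, Matrix.transpose_apply]
  rw [hrhs]
  set g : Fin N → ℝ := fun k => Bmat N ut k i * dvec N ut k * Bmat N ut k j with hg
  have hgzero : ∀ k : Fin N, ¬(((i:ℕ) = (k:ℕ) ∨ (i:ℕ) = (k:ℕ)+1) ∧ ((j:ℕ) = (k:ℕ) ∨ (j:ℕ) = (k:ℕ)+1)) → g k = 0 := by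
    intro k hk
    show Bmat N ut k i * dvec N ut k * Bmat N ut k j = 0
    rcases not_and_or.mp hk with h | h
    · rw [Bmat_zero ut k i (by omega)]; ring
    · rw [Bmat_zero ut k j (by omega)]; ring
  have hBdiag : ∀ k : Fin N, Bmat N ut k k = 1 / ut k := fun k => by rw [Bmat, if_pos rfl]
  have hBsucc : ∀ k m : Fin N, (m : ℕ) = (k : ℕ) + 1 → Bmat N ut k m = -(1 / ut m) := by
    intro k m h
    rw [Bmat, if_neg (by omega), if_pos h]
  have hd : ∀ k : Fin N, dvec N ut k = ut k * extZ N ut (((k:ℕ):ℤ) + 1) := by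
    intro k; rw [dvec, extZ_fin]
  by_cases hij : i = j
  · subst hij
    rw [Lminus, if_pos rfl]
    by_cases h0 : (i : ℕ) = 0
    · have hsum : ∑ k, g k = g i := by
        rw [← Finset.sum_singleton g i]
        apply (Finset.sum_subset (Finset.subset_univ _) _).symm
        intro k _ hk
        simp only [Finset.mem_singleton] at hk
        apply hgzero
        have : (k:ℕ) ≠ (i:ℕ) := fun hc => hk (Fin.ext hc)
        omega
      rw [hsum]
      show _ = Bmat N ut i i * dvec N ut i * Bmat N ut i i
      rw [hBdiag, hd]
      have hneg : extZ N ut (((i:ℕ):ℤ) - 1) = 0 := extZ_out ut (by omega)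
      rw [hneg]
      field_simp [hut i]
      ring
    · have hlt : (i:ℕ) - 1 < N := by omega
      set k' : Fin N := ⟨(i:ℕ) - 1, hlt⟩ with hk'
      have hk'i : k' ≠ i := by
        intro hc
        have := congrArg Fin.val hc
        simp only [hk'] at this
        omega
      have hsum : ∑ k, g k = g k' + g i := by
        rw [← Finset.sum_pair hk'i]
        apply (Finset.sum_subset (Finset.subset_univ _) _).symm
        intro k _ hk
        simp only [Finset.mem_insert, Finset.mem_singleton] at hk
        push_neg at hk
        apply hgzero
        have h1 : (k:ℕ) ≠ (k':ℕ) := fun hc => hk.1 (Fin.ext hc)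
        have h2 : (k:ℕ) ≠ (i:ℕ) := fun hc => hk.2 (Fin.ext hc)
        simp only [hk'] at h1
        omega
      rw [hsum]
      show _ = Bmat N ut k' i * dvec N ut k' * Bmat N ut k' i + Bmat N ut i i * dvec N ut i * Bmat N ut i i
      rw [hBdiag, hd i, hBsucc k' i (by simp [hk']; omega), hd k']
      have e1 : extZ N ut (((k':ℕ):ℤ) + 1) = ut i := by
        have : ((k':ℕ):ℤ) + 1 = ((i:ℕ):ℤ) := by simp [hk']; omega
        rw [this, extZ_fin]
      have e2 : (((i:ℕ):ℤ) - 1) = ((k':ℕ):ℤ) := by simp [hk']; omega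
      rw [e1, e2, extZ_coe ut hlt]
      have hmk : (⟨(i:ℕ)-1, hlt⟩ : Fin N) = k' := rfl
      rw [hmk]
      field_simp [hut i]
  · have hijv : (i:ℕ) ≠ (j:ℕ) := fun hc => hij (Fin.ext hc)
    rw [Lminus, if_neg hij]
    by_cases hsucc : (j:ℕ) = (i:ℕ) + 1
    · rw [if_pos (by omega)]
      have hsum : ∑ k, g k = g i := by
        rw [← Finset.sum_singleton g i]
        apply (Finset.sum_subset (Finset.subset_univ _) _).symm
        intro k _ hk
        simp only [Finset.mem_singleton] at hk
        apply hgzero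
        have : (k:ℕ) ≠ (i:ℕ) := fun hc => hk (Fin.ext hc)
        omega
      rw [hsum]
      show _ = Bmat N ut i i * dvec N ut i * Bmat N ut i j
      rw [hBdiag, hd i, hBsucc i j hsucc]
      have e1 : extZ N ut (((i:ℕ):ℤ) + 1) = ut j := by
        have : ((i:ℕ):ℤ) + 1 = ((j:ℕ):ℤ) := by omega
        rw [this, extZ_fin]
      rw [e1]
      field_simp [hut i, hut j]
    · by_cases hsucc2 : (i:ℕ) = (j:ℕ) + 1
      · rw [if_pos (by omega)]
        have hsum : ∑ k, g k = g j := by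
          rw [← Finset.sum_singleton g j]
          apply (Finset.sum_subset (Finset.subset_univ _) _).symm
          intro k _ hk
          simp only [Finset.mem_singleton] at hk
          apply hgzero
          have : (k:ℕ) ≠ (j:ℕ) := fun hc => hk (Fin.ext hc)
          omega
        rw [hsum]
        show _ = Bmat N ut j i * dvec N ut j * Bmat N ut j j
        rw [hBdiag, hd j, hBsucc j i hsucc2]
        have e1 : extZ N ut (((j:ℕ):ℤ) + 1) = ut i := by
          have : ((j:ℕ):ℤ) + 1 = ((i:ℕ):ℤ) := by omega
          rw [this, extZ_fin]
        rw [e1]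
        field_simp [hut i, hut j]
      · rw [if_neg (by omega)]
        symm
        apply Finset.sum_eq_zero
        intro k _
        apply hgzero
        omega

end Fac

lemma tri_card {N : ℕ} (f : Fin N → ℝ) :
    (univ.filter fun n => f n < 0).card + (univ.filter fun n => f n = 0).card
      + (univ.filter fun n => 0 < f n).card = N := by
  classical
  have h1 := Finset.card_filter_add_card_filter_not
    (s := (univ : Finset (Fin N))) (p := fun n => f n < 0)
  have h2 := Finset.card_filter_add_card_filter_not
    (s := (univ : Finset (Fin N)).filter (fun n => ¬ f n < 0)) (p := fun n => f n = 0)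
  rw [Finset.filter_filter, Finset.filter_filter] at h2
  have e1 : (univ.filter fun n => ¬ f n < 0 ∧ f n = 0) = (univ.filter fun n => f n = 0) := by
    ext n
    simp only [Finset.mem_filter, Finset.mem_univ, true_and]
    constructor
    · exact fun h => h.2
    · intro h; exact ⟨by simp [h], h⟩
  have e2 : (univ.filter fun n => ¬ f n < 0 ∧ ¬ f n = 0) = (univ.filter fun n => 0 < f n) := by
    ext n
    simp only [Finset.mem_filter, Finset.mem_univ, true_and]
    constructor
    · rintro ⟨ha, hb⟩; exact lt_of_le_of_ne (not_lt.mp ha) (Ne.symm hb)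
    · intro h; exact ⟨not_lt.mpr h.le, ne_of_gt h⟩
  rw [e1, e2] at h2
  have hcu : (univ : Finset (Fin N)).card = N := by simp
  omega

/-- For a code with `|ũ_n| = A` for all `n`, all roots of the characteristic polynomial
of `L̃⁺L̃⁻` are real; `0` is a simple root; exactly `N₀(ũ)` roots are negative and
exactly `N − N₀(ũ) − 1` roots are positive, counted with multiplicity. -/
theorem LplusLminus_spectrum_allA (p q : ℕ) (hp : 2 ≤ p) (hpq : p < q)
    (γ : ℝ) (hγ0 : 0 < γ) (hγ : γ < gammaCrit p q)
    (a A : ℝ) (ha : 0 < a) (haA : a < A)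
    (hroota : 1 - a ^ (p - 1) + γ * a ^ (q - 1) = 0)
    (hrootA : 1 - A ^ (p - 1) + γ * A ^ (q - 1) = 0)
    (N : ℕ) (hN : 1 ≤ N) (ut : Fin N → ℝ) (hut : ∀ n, |ut n| = A) :
    (∀ z ∈ ((Lplus N p q γ ut * Lminus N ut).charpoly.map (algebraMap ℝ ℂ)).roots,
      z.im = 0) ∧
    (Lplus N p q γ ut * Lminus N ut).charpoly.rootMultiplicity 0 = 1 ∧
    (((Lplus N p q γ ut * Lminus N ut).charpoly.roots.filter (fun x => x < 0)).card
      = nFlips N ut) ∧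
    (((Lplus N p q γ ut * Lminus N ut).charpoly.roots.filter (fun x => 0 < x)).card
      = N - nFlips N ut - 1) := by
  classical
  have hA0 : 0 < A := ha.trans haA
  have hut0 : ∀ n, ut n ≠ 0 := by
    intro n hcn
    have := hut n
    rw [hcn, abs_zero] at this
    linarith
  set c : ℝ := 1 - (p : ℝ) * A ^ (p - 1) + γ * (q : ℝ) * A ^ (q - 1) with hcdef
  have hc : 0 < c := cpos p q hp hpq γ hγ0 a A ha haA hroota hrootA
  -- Lplus is the scalar matrix c
  have hLplus : Lplus N p q γ ut = Matrix.diagonal (fun _ => c) := by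
    have hfun : (fun n => 1 - (p : ℝ) * |ut n| ^ (p - 1) + γ * (q : ℝ) * |ut n| ^ (q - 1))
        = (fun _ : Fin N => c) := by
      funext n
      rw [hut n]
    unfold Lplus
    rw [hfun]
  set d' : Fin N → ℝ := fun n => c * dvec N ut n with hd'
  set M : Matrix (Fin N) (Fin N) ℝ := Lplus N p q γ ut * Lminus N ut with hM
  have hfacM : M = (Bmat N ut)ᵀ * Matrix.diagonal d' * Bmat N ut := by
    rw [hM, hLplus, Lminus_fac ut hut0]
    have h1 : Matrix.diagonal (fun _ : Fin N => c) = c • (1 : Matrix (Fin N) (Fin N) ℝ) := by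
      rw [Matrix.smul_one_eq_diagonal]
    have h2 : Matrix.diagonal d' = c • Matrix.diagonal (dvec N ut) := by
      rw [← Matrix.diagonal_smul]
      congr 1
    rw [h1, h2, smul_mul_assoc, one_mul, Matrix.mul_smul, Matrix.smul_mul]
  have hherm : M.IsHermitian := by
    show Mᴴ = M
    rw [Matrix.conjTranspose_eq_transpose_of_trivial, hfacM, Matrix.transpose_mul,
      Matrix.transpose_mul, Matrix.transpose_transpose, Matrix.diagonal_transpose]
    rw [Matrix.mul_assoc]
  -- eigenvalue inertia
  obtain ⟨hcountneg, hcountpos⟩ := inertia_eq M hherm d' (Bmat N ut) (Bmat_det ut hut0) hfacM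
  -- counting for d'
  have hdvec_last : ∀ (n : Fin N) (hn : (n:ℕ) + 1 < N), dvec N ut n = ut n * ut ⟨(n:ℕ)+1, hn⟩ := by
    intro n hn
    rw [dvec, extZ_fin]
    congr 1
    have : ((n:ℕ):ℤ) + 1 = (((n:ℕ)+1 : ℕ) : ℤ) := by push_cast; ring
    rw [this, extZ_coe ut hn]
  have hdvec_zero : ∀ n : Fin N, ¬((n:ℕ) + 1 < N) → dvec N ut n = 0 := by
    intro n hn
    rw [dvec, extZ_out ut (k := ((n:ℕ):ℤ) + 1) (by omega), mul_zero]
  have hnegd : (univ.filter fun n => d' n < 0).card = nFlips N ut := by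
    rw [nFlips]
    refine Finset.card_bij' (fun (n : Fin N) _ => (n:ℕ))
      (fun (m : ℕ) hm => (⟨m, by
        have := Finset.mem_range.mp (Finset.mem_of_mem_filter m hm)
        omega⟩ : Fin N)) ?_ ?_ ?_ ?_
    · intro n hn
      have hn' : c * dvec N ut n < 0 := (Finset.mem_filter.mp hn).2
      have hdn : dvec N ut n < 0 := by
        by_contra hcon
        push_neg at hcon
        have : 0 ≤ c * dvec N ut n := mul_nonneg hc.le hcon
        linarith
      have hlt : (n:ℕ) + 1 < N := by
        by_contra hcon
        rw [hdvec_zero n hcon] at hdn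
        exact lt_irrefl 0 hdn
      show (n:ℕ) ∈ (Finset.range (N-1)).filter _
      rw [Finset.mem_filter, Finset.mem_range]
      refine ⟨by omega, ?_⟩
      rw [dif_pos (by omega : (n:ℕ) < N), dif_pos (by omega : (n:ℕ)+1 < N)]
      rw [hdvec_last n hlt] at hdn
      have hfn : (⟨(n:ℕ), by omega⟩ : Fin N) = n := Fin.ext rfl
      rw [hfn]
      exact hdn
    · intro m hm
      have hmr : m < N - 1 := Finset.mem_range.mp (Finset.mem_of_mem_filter m hm)
      have hm2 := (Finset.mem_filter.mp hm).2
      rw [dif_pos (by omega : m < N), dif_pos (by omega : m + 1 < N)] at hm2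
      show (⟨m, by omega⟩ : Fin N) ∈ Finset.filter _ Finset.univ
      rw [Finset.mem_filter]
      refine ⟨Finset.mem_univ _, ?_⟩
      show c * dvec N ut ⟨m, by omega⟩ < 0
      apply mul_neg_of_pos_of_neg hc
      rw [hdvec_last ⟨m, by omega⟩ (show m + 1 < N by omega)]
      exact hm2
    · intro n hn; exact Fin.ext rfl
    · intro m hm; rfl
  have hzerod : (univ.filter fun n => d' n = 0).card = 1 := by
    have : (univ.filter fun n => d' n = 0) = {(⟨N-1, by omega⟩ : Fin N)} := by
      ext n
      simp only [Finset.mem_filter, Finset.mem_univ, true_and, Finset.mem_singleton]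
      constructor
      · intro h
        have h'' : c * dvec N ut n = 0 := h
        have hdn : dvec N ut n = 0 := by
          rcases mul_eq_zero.mp h'' with h' | h'
          · exact absurd h' (ne_of_gt hc)
          · exact h'
        have hn1 : ¬((n:ℕ) + 1 < N) := by
          intro hcon
          rw [hdvec_last n hcon] at hdn
          rcases mul_eq_zero.mp hdn with h' | h'
          · exact hut0 n h'
          · exact hut0 _ h'
        apply Fin.ext
        simp only
        omega
      · intro h
        subst h
        show c * dvec N ut _ = 0
        rw [hdvec_zero _ (by simp; omega), mul_zero]
    rw [this, Finset.card_singleton]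
  have htri_d := tri_card d'
  have htri_mu := tri_card hherm.eigenvalues
  have hflips_le : nFlips N ut ≤ N - 1 := by
    rw [nFlips]
    calc _ ≤ (Finset.range (N-1)).card := Finset.card_filter_le _ _
      _ = N - 1 := Finset.card_range _
  have hposd : (univ.filter fun n => 0 < d' n).card = N - 1 - nFlips N ut := by omega
  -- charpoly facts
  have hchar : M.charpoly = ∏ i, (X - C (hherm.eigenvalues i)) := herm_charpoly M hherm
  have hroots : M.charpoly.roots = Multiset.map hherm.eigenvalues univ.val := by
    rw [hchar]
    have : (∏ i, (X - C (hherm.eigenvalues i)))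
        = (Multiset.map (fun a => X - C a) (Multiset.map hherm.eigenvalues univ.val)).prod := by
      rw [Multiset.map_map]
      rfl
    rw [this, roots_multiset_prod_X_sub_C]
  have hcountzero_mu : (univ.filter fun i => hherm.eigenvalues i = 0).card = 1 := by omega
  refine ⟨?_, ?_, ?_, ?_⟩
  · -- all complex roots real
    intro z hz
    have hmap : M.charpoly.map (algebraMap ℝ ℂ)
        = ∏ i, (X - C ((hherm.eigenvalues i : ℂ))) := by
      rw [hchar, Polynomial.map_prod]
      congr 1
      funext i
      rw [Polynomial.map_sub, Polynomial.map_X, Polynomial.map_C]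
      rfl
    rw [hmap] at hz
    have hne : (∏ i, (X - C ((hherm.eigenvalues i : ℂ)))) ≠ 0 := by
      apply Finset.prod_ne_zero_iff.mpr
      intro i _
      exact X_sub_C_ne_zero _
    have hroot := (Polynomial.mem_roots hne).mp hz
    rw [Polynomial.IsRoot, Polynomial.eval_prod] at hroot
    obtain ⟨i, _, hi⟩ := Finset.prod_eq_zero_iff.mp hroot
    rw [Polynomial.eval_sub, Polynomial.eval_X, Polynomial.eval_C, sub_eq_zero] at hi
    rw [hi]
    exact Complex.ofReal_im _
  · -- simple zero root
    rw [← Polynomial.count_roots, hroots, Multiset.count_map]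
    have : (univ.val.filter fun i => (0:ℝ) = hherm.eigenvalues i).card
        = (univ.filter fun i => hherm.eigenvalues i = 0).card := by
      rw [← Finset.filter_val]
      have : (univ.filter fun i => (0:ℝ) = hherm.eigenvalues i)
          = (univ.filter fun i => hherm.eigenvalues i = 0) := by
        apply Finset.filter_congr
        intro n _
        exact eq_comm
      rw [this]
      rfl
    rw [this, hcountzero_mu]
  · rw [hroots]
    have : Multiset.card ((Multiset.map hherm.eigenvalues univ.val).filter (fun x => x < 0))
        = Multiset.countP (fun x => x < 0) (Multiset.map hherm.eigenvalues univ.val) := by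
      rw [Multiset.countP_eq_card_filter]
    rw [this, Multiset.countP_map]
    have : (univ.val.filter fun i => hherm.eigenvalues i < 0).card
        = (univ.filter fun i => hherm.eigenvalues i < 0).card := by
      rw [← Finset.filter_val]; rfl
    rw [this, hcountneg, hnegd]
  · rw [hroots]
    have : Multiset.card ((Multiset.map hherm.eigenvalues univ.val).filter (fun x => 0 < x))
        = Multiset.countP (fun x => 0 < x) (Multiset.map hherm.eigenvalues univ.val) := by
      rw [Multiset.countP_eq_card_filter]
    rw [this, Multiset.countP_map]
    have : (univ.val.filter fun i => 0 < hherm.eigenvalues i).card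
        = (univ.filter fun i => 0 < hherm.eigenvalues i).card := by
      rw [← Finset.filter_val]; rfl
    rw [this, hcountpos, hposd]
    omega
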